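/- arXiv:2410.15239 — 3 statements merged into one kernel-verified Lean document; each statement's English description precedes it below -/
import Mathlib

section
/- For exchangeable real-valued random variables s_1, ..., s_n, s_{n+1}, the probability that s_{n+1} is at most the ⌈(1-α)(n+1)⌉-th smallest value among s_1,...,s_n is at least 1-α. -/
open MeasureTheory Filter Set
open scoped ENNReal

/-- The `k`-th smallest element of a list of reals (1-indexed). -/
noncomputable def kthSmallest (l : List ℝ) (k : ℕ) : ℝ :=
  (l.mergeSort (fun a b => a ≤ b)).getD (k - 1) 0

theorem le_kthSmallest_iff (l : List ℝ) (k : ℕ) (hk1 : 1 ≤ k) (hk : k ≤ l.length) (x : ℝ) :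
    x ≤ kthSmallest l k ↔ l.countP (fun w => decide (w < x)) < k := by
  set m := l.mergeSort (fun a b => a ≤ b) with hm
  have hperm : m.Perm l := l.mergeSort_perm _
  have hsort : m.Pairwise (· ≤ ·) := by
    have := List.pairwise_mergeSort (le := fun a b : ℝ => decide (a ≤ b))
      (fun a b c h1 h2 => by simp only [decide_eq_true_eq] at *; linarith)
      (fun a b => by simpa using le_total a b) l
    simpa using this
  have hlen : m.length = l.length := hperm.length_eq
  have hkm : k - 1 < m.length := by omega
  have hget : kthSmallest l k = m[k-1] := by
    rw [kthSmallest, ← hm, List.getD_eq_getElem?_getD, List.getElem?_eq_getElem hkm]; rfl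
  have hcount : l.countP (fun w => decide (w < x)) = m.countP (fun w => decide (w < x)) :=
    (hperm.countP_eq _).symm
  rw [hget, hcount]
  constructor
  · intro hx
    have hsplit : m.countP (fun w => decide (w < x)) =
        (m.take (k-1)).countP (fun w => decide (w < x)) +
        (m.drop (k-1)).countP (fun w => decide (w < x)) := by
      rw [← List.countP_append, List.take_append_drop]
    have hdrop : (m.drop (k-1)).countP (fun w => decide (w < x)) = 0 := by
      rw [List.countP_eq_zero]
      intro w hw
      rw [List.mem_drop_iff_getElem] at hw
      obtain ⟨i, hi, rfl⟩ := hw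
      have : m[k-1] ≤ m[k-1+i] := hsort.rel_get_of_le (by simp)
      simpa using not_lt.2 (le_trans hx this)
    have htake : (m.take (k-1)).countP (fun w => decide (w < x)) ≤ k - 1 := by
      calc (m.take (k-1)).countP (fun w => decide (w < x)) ≤ (m.take (k-1)).length :=
            List.countP_le_length
        _ ≤ k - 1 := by simp [List.length_take]
    omega
  · intro hc
    by_contra hx
    push_neg at hx
    have htake : (m.take k).countP (fun w => decide (w < x)) = (m.take k).length := by
      rw [List.countP_eq_length]
      intro w hw
      rw [List.mem_take_iff_getElem] at hw
      obtain ⟨i, hi, rfl⟩ := hw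
      have hik : i < k := by omega
      have him : i < m.length := by omega
      have : m[i] ≤ m[k-1] := hsort.rel_get_of_le (by simp; omega)
      simpa using lt_of_le_of_lt this hx
    have hlt : (m.take k).length = k := by simp [List.length_take]; omega
    have : m.countP (fun w => decide (w < x)) ≥ k := by
      rw [show m.countP (fun w => decide (w < x)) =
          (m.take k).countP (fun w => decide (w < x)) +
          (m.drop k).countP (fun w => decide (w < x)) by
        rw [← List.countP_append, List.take_append_drop]]
      omega
    omega

theorem le_countP_le_kthSmallest (l : List ℝ) (k : ℕ) (hk1 : 1 ≤ k) (hk : k ≤ l.length) :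
    k ≤ l.countP (fun w => decide (w ≤ kthSmallest l k)) := by
  set m := l.mergeSort (fun a b => a ≤ b) with hm
  have hperm : m.Perm l := l.mergeSort_perm _
  have hsort : m.Pairwise (· ≤ ·) := by
    have := List.pairwise_mergeSort (le := fun a b : ℝ => decide (a ≤ b))
      (fun a b c h1 h2 => by simp only [decide_eq_true_eq] at *; linarith)
      (fun a b => by simpa using le_total a b) l
    simpa using this
  have hlen : m.length = l.length := hperm.length_eq
  have hkm : k - 1 < m.length := by omega
  have hget : kthSmallest l k = m[k-1] := by
    rw [kthSmallest, ← hm, List.getD_eq_getElem?_getD, List.getElem?_eq_getElem hkm]; rfl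
  set b := kthSmallest l k with hb
  have hcount : l.countP (fun w => decide (w ≤ b)) = m.countP (fun w => decide (w ≤ b)) :=
    (hperm.countP_eq _).symm
  have htake : (m.take k).countP (fun w => decide (w ≤ b)) = (m.take k).length := by
    rw [List.countP_eq_length]
    intro w hw
    rw [List.mem_take_iff_getElem] at hw
    obtain ⟨i, hi, rfl⟩ := hw
    have hik : i < k := by omega
    have him : i < m.length := by omega
    have : m[i] ≤ m[k-1] := hsort.rel_get_of_le (by simp; omega)
    simpa [hget] using this
  have hlt : (m.take k).length = k := by simp [List.length_take]; omega
  have hsplit : m.countP (fun w => decide (w ≤ b)) =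
      (m.take k).countP (fun w => decide (w ≤ b)) +
      (m.drop k).countP (fun w => decide (w ≤ b)) := by
    rw [← List.countP_append, List.take_append_drop]
  omega

theorem countP_ofFn' (m : ℕ) (f : Fin m → ℝ) (p : ℝ → Bool) :
    (List.ofFn f).countP p = (Finset.univ.filter (fun i => p (f i) = true)).card := by
  induction m with
  | zero => simp
  | succ m ih =>
    rw [List.ofFn_succ, List.countP_cons, ih (fun i => f i.succ),
      Fin.card_filter_univ_succ (p := fun i => p (f i) = true)]
    by_cases h : p (f 0) <;> simp [h]

theorem card_filter_perm {ι : Type*} [Fintype ι] [DecidableEq ι] (σ : Equiv.Perm ι)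
    (q : ι → Prop) [DecidablePred q] :
    (Finset.univ.filter (fun j => q (σ j))).card = (Finset.univ.filter q).card := by
  apply Finset.card_bij (fun j _ => σ j)
  · intro a ha; simp only [Finset.mem_filter, Finset.mem_univ, true_and] at ha ⊢; exact ha
  · intro a _ b _ hab; exact σ.injective hab
  · intro b hb
    refine ⟨σ.symm b, ?_, by simp⟩
    simp only [Finset.mem_filter, Finset.mem_univ, true_and] at hb ⊢
    simpa using hb

/-- Counting lemma: at least `k` indices `i` have fewer than `k` values strictly below `v i`. -/
theorem counting_lemma (m : ℕ) (v : Fin m → ℝ) (k : ℕ) (hk1 : 1 ≤ k) (hk : k ≤ m) :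
    k ≤ (Finset.univ.filter
      (fun i => (Finset.univ.filter (fun j => v j < v i)).card < k)).card := by
  have hlen : (List.ofFn v).length = m := List.length_ofFn
  set b := kthSmallest (List.ofFn v) k with hb
  have h1 : k ≤ (Finset.univ.filter (fun i => v i ≤ b)).card := by
    have h := le_countP_le_kthSmallest (List.ofFn v) k hk1 (by omega)
    rw [countP_ofFn'] at h
    simpa using h
  refine le_trans h1 (Finset.card_le_card ?_)
  intro i hi
  simp only [Finset.mem_filter, Finset.mem_univ, true_and] at hi ⊢
  have h2 := (le_kthSmallest_iff (List.ofFn v) k hk1 (by omega) (v i)).1 hi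
  rw [countP_ofFn'] at h2
  simpa using h2

/-- Split-conformal coverage: for exchangeable `s_1,…,s_n,s_{n+1}`, the probability that
`s_{n+1}` is at most the `⌈(1-α)(n+1)⌉`-th smallest of `s_1,…,s_n` is at least `1-α`. -/
theorem conformal_coverage {Ω : Type*} [MeasurableSpace Ω] (μ : Measure Ω)
    [IsProbabilityMeasure μ] {n : ℕ} (s : Fin (n + 1) → Ω → ℝ)
    (hmeas : ∀ i, Measurable (s i))
    (hexch : ∀ σ : Equiv.Perm (Fin (n + 1)),
      Measure.map (fun ω => fun i => s (σ i) ω) μ = Measure.map (fun ω => fun i => s i ω) μ)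
    (α : ℝ) (hα : α ∈ Set.Ioo (0 : ℝ) 1)
    (hk : ⌈(1 - α) * (n + 1)⌉₊ ≤ n) :
    1 - α ≤ (μ {ω | s (Fin.last n) ω ≤
      kthSmallest (List.ofFn (fun i : Fin n => s i.castSucc ω)) ⌈(1 - α) * (n + 1)⌉₊}).toReal := by
  classical
  obtain ⟨hα0, hα1⟩ := hα
  set k := ⌈(1 - α) * (n + 1)⌉₊ with hkdef
  have hk1 : 1 ≤ k := by
    have hpos : (0:ℝ) < (1 - α) * (n + 1) := by
      have : (0:ℝ) < 1 - α := by linarith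
      positivity
    exact Nat.ceil_pos.2 hpos
  -- the ℕ-valued rank functions
  set D : Fin (n+1) → (Fin (n+1) → ℝ) → ℕ :=
    fun i v => (Finset.univ.filter (fun j => v j < v i)).card with hD
  have hDmeas : ∀ i, Measurable (D i) := by
    intro i
    have : D i = fun v => ∑ j, if v j < v i then 1 else 0 := by
      funext v; exact Finset.card_filter _ _
    rw [this]
    exact Finset.measurable_sum _ fun j _ =>
      Measurable.ite (measurableSet_lt (measurable_pi_apply j) (measurable_pi_apply i))
        measurable_const measurable_const
  set B : Fin (n+1) → Set (Fin (n+1) → ℝ) := fun i => {v | D i v < k} with hB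
  have hBmeas : ∀ i, MeasurableSet (B i) := by
    intro i
    show MeasurableSet (D i ⁻¹' Set.Iio k)
    exact (hDmeas i) MeasurableSpace.measurableSet_top
  set S : Ω → (Fin (n+1) → ℝ) := fun ω j => s j ω with hS
  have hSmeas : Measurable S := measurable_pi_lambda _ hmeas
  set A : Fin (n+1) → Set Ω := fun i => S ⁻¹' (B i) with hA
  have hAmeas : ∀ i, MeasurableSet (A i) := fun i => hSmeas (hBmeas i)
  -- all A i have the same measure
  have hsame : ∀ i, μ (A i) = μ (A (Fin.last n)) := by
    intro i
    set σ := Equiv.swap i (Fin.last n) with hσ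
    have hT : Measurable (fun ω => fun j => s (σ j) ω) :=
      measurable_pi_lambda _ fun j => hmeas _
    have h1 := congrArg (fun ν : Measure (Fin (n+1) → ℝ) => ν (B (Fin.last n))) (hexch σ)
    rw [Measure.map_apply hT (hBmeas _), Measure.map_apply hSmeas (hBmeas _)] at h1
    have hpre : (fun ω => fun j => s (σ j) ω) ⁻¹' (B (Fin.last n)) = A i := by
      ext ω
      simp only [hA, hB, hD, Set.mem_preimage, Set.mem_setOf_eq, hS]
      have hlast : σ (Fin.last n) = i := Equiv.swap_apply_right _ _
      simp only [hlast]
      rw [card_filter_perm σ (fun j => s j ω < s i ω)]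
    rw [hpre] at h1
    exact h1
  -- k ≤ sum of measures
  have hkey : (k : ℝ≥0∞) ≤ ∑ i : Fin (n+1), μ (A i) := by
    have hind : ∀ i : Fin (n+1), μ (A i) =
        ∫⁻ ω, (A i).indicator (fun _ => (1:ℝ≥0∞)) ω ∂μ := fun i =>
      (lintegral_indicator_one (hAmeas i)).symm
    calc (k : ℝ≥0∞) = ∫⁻ _, (k : ℝ≥0∞) ∂μ := by simp
      _ ≤ ∫⁻ ω, ∑ i : Fin (n+1), (A i).indicator (fun _ => (1:ℝ≥0∞)) ω ∂μ := by
          apply lintegral_mono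
          intro ω
          show (k : ℝ≥0∞) ≤ ∑ i : Fin (n+1), (A i).indicator (fun _ => (1:ℝ≥0∞)) ω
          have hsum : ∑ i : Fin (n+1), (A i).indicator (fun _ => (1:ℝ≥0∞)) ω =
              ((Finset.univ.filter (fun i : Fin (n+1) => ω ∈ A i)).card : ℝ≥0∞) := by
            rw [Finset.card_filter, Nat.cast_sum]
            refine Finset.sum_congr rfl fun i _ => ?_
            by_cases h : ω ∈ A i <;> simp [Set.indicator_apply, h]
          rw [hsum]
          have hcount := counting_lemma (n+1) (fun j => s j ω) k hk1 (by omega)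
          have : (Finset.univ.filter (fun i : Fin (n+1) => ω ∈ A i)) =
              (Finset.univ.filter (fun i : Fin (n+1) =>
                (Finset.univ.filter (fun j => s j ω < s i ω)).card < k)) := by
            apply Finset.filter_congr
            intro i _
            simp [hA, hB, hD, hS]
          rw [this]
          exact_mod_cast hcount
      _ = ∑ i : Fin (n+1), μ (A i) := by
          rw [lintegral_finset_sum (f := fun i => (A i).indicator (fun _ => (1:ℝ≥0∞)))
            _ (fun i _ => measurable_one.indicator (hAmeas i))]
          exact Finset.sum_congr rfl fun i _ => (hind i).symm
  have hsum : ∑ i : Fin (n+1), μ (A i) = (n+1 : ℝ≥0∞) * μ (A (Fin.last n)) := by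
    rw [Finset.sum_congr rfl fun i _ => hsame i, Finset.sum_const]
    simp [mul_comm]
  rw [hsum] at hkey
  -- the target set equals A (last n)
  have hTA : {ω | s (Fin.last n) ω ≤
      kthSmallest (List.ofFn (fun i : Fin n => s i.castSucc ω)) k} = A (Fin.last n) := by
    ext ω
    simp only [Set.mem_setOf_eq, hA, hB, hD, hS, Set.mem_preimage]
    rw [le_kthSmallest_iff _ k hk1 (by simpa using hk), countP_ofFn']
    constructor
    · intro h
      have heq : (Finset.univ.filter (fun j : Fin (n+1) => s j ω < s (Fin.last n) ω)).card =
          (Finset.univ.filter (fun j : Fin n => s j.castSucc ω < s (Fin.last n) ω)).card := by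
        rw [Finset.card_filter, Finset.card_filter, Fin.sum_univ_castSucc]
        simp
      rw [heq]
      simpa using h
    · intro h
      have heq : (Finset.univ.filter (fun j : Fin (n+1) => s j ω < s (Fin.last n) ω)).card =
          (Finset.univ.filter (fun j : Fin n => s j.castSucc ω < s (Fin.last n) ω)).card := by
        rw [Finset.card_filter, Finset.card_filter, Fin.sum_univ_castSucc]
        simp
      rw [heq] at h
      simpa using h
  rw [hTA]
  -- final arithmetic
  have hfin : μ (A (Fin.last n)) ≠ ⊤ := measure_ne_top _ _
  have hR : (k : ℝ) ≤ (n+1 : ℝ) * (μ (A (Fin.last n))).toReal := by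
    have h2 : ((k : ℝ≥0∞)).toReal ≤ ((n+1 : ℝ≥0∞) * μ (A (Fin.last n))).toReal := by
      apply ENNReal.toReal_mono _ hkey
      exact ENNReal.mul_ne_top (by simp) hfin
    rw [ENNReal.toReal_mul] at h2
    simpa [ENNReal.toReal_add] using h2
  have hceil : (1 - α) * (n + 1) ≤ (k : ℝ) := Nat.le_ceil _
  have hn : (0:ℝ) < n + 1 := by positivity
  nlinarith [hR, hceil]
end

section
/- For exchangeable real random variables s_1,...,s_n,s_{n+1} with almost surely distinct values, the conformal p-value p = (1 + #{i ≤ n : s_i < s_{n+1}})/(n+1) satisfies P(p ≤ α) ≤ α for every α ∈ [0,1]. -/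
open MeasureTheory Filter Set
open scoped ENNReal

namespace ConformalAux

variable {n : ℕ}

noncomputable def rnk (v : Fin (n + 1) → ℝ) (k : Fin (n + 1)) : ℕ :=
  (Finset.univ.filter (fun i => v i < v k)).card

lemma rnk_eq_sum (v : Fin (n + 1) → ℝ) (k : Fin (n + 1)) :
    rnk v k = ∑ i, if v i < v k then 1 else 0 := by
  classical
  rw [rnk, Finset.card_filter]

lemma measurable_rnk (k : Fin (n + 1)) :
    Measurable (fun v : Fin (n + 1) → ℝ => rnk v k) := by
  simp only [rnk_eq_sum]
  exact Finset.measurable_sum _ fun i _ =>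
    Measurable.ite (measurableSet_lt (measurable_pi_apply i) (measurable_pi_apply k))
      measurable_const measurable_const

lemma rnk_le (v : Fin (n + 1) → ℝ) (k : Fin (n + 1)) : rnk v k ≤ n := by
  have hsub : (Finset.univ.filter (fun i => v i < v k)) ⊆ Finset.univ.erase k := by
    intro i hi
    simp only [Finset.mem_filter] at hi
    refine Finset.mem_erase.2 ⟨?_, Finset.mem_univ _⟩
    rintro rfl; exact lt_irrefl _ hi.2
  calc rnk v k ≤ (Finset.univ.erase k).card := Finset.card_le_card hsub
    _ = n := by
        rw [Finset.card_erase_of_mem (Finset.mem_univ k)]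
        simp

lemma rnk_comp (v : Fin (n + 1) → ℝ) (σ : Equiv.Perm (Fin (n + 1))) (k : Fin (n + 1)) :
    rnk (v ∘ σ) k = rnk v (σ k) := by
  unfold rnk
  rw [show (Finset.univ.filter fun i => (v ∘ σ) i < (v ∘ σ) k)
      = (Finset.univ.filter fun i => v i < v (σ k)).map σ.symm.toEmbedding by
    ext i
    simp [Finset.mem_map_equiv]]
  simp

lemma rnk_lt_rnk {v : Fin (n + 1) → ℝ} {k l : Fin (n + 1)} (h : v k < v l) :
    rnk v k < rnk v l := by
  apply Finset.card_lt_card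
  rw [Finset.ssubset_def]
  constructor
  · intro i hi
    simp only [Finset.mem_filter] at *
    exact ⟨hi.1, hi.2.trans h⟩
  · intro hsub
    have := hsub (Finset.mem_filter.2 ⟨Finset.mem_univ k, h⟩)
    simp only [Finset.mem_filter] at this
    exact lt_irrefl _ this.2

lemma rnk_inj {v : Fin (n + 1) → ℝ} (hv : Function.Injective v) :
    Function.Injective (rnk v) := by
  intro k l h
  rcases lt_trichotomy (v k) (v l) with hlt | heq | hgt
  · exact absurd h (rnk_lt_rnk hlt).ne
  · exact hv heq
  · exact absurd h.symm (rnk_lt_rnk hgt).ne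

end ConformalAux
open ConformalAux in
/-- Conformal p-value validity: for exchangeable, a.s. distinct `s_1,…,s_n,s_{n+1}`, the p-value
`p = (1 + #{i ≤ n : s_i < s_{n+1}})/(n+1)` satisfies `P(p ≤ α) ≤ α` for every `α ∈ [0,1]`. -/
theorem conformal_pvalue_valid {Ω : Type*} [MeasurableSpace Ω] (μ : Measure Ω)
    [IsProbabilityMeasure μ] {n : ℕ} (s : Fin (n + 1) → Ω → ℝ)
    (hmeas : ∀ i, Measurable (s i))
    (hexch : ∀ σ : Equiv.Perm (Fin (n + 1)),
      Measure.map (fun ω => fun i => s (σ i) ω) μ = Measure.map (fun ω => fun i => s i ω) μ)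
    (hdist : μ {ω | ∃ i j : Fin (n + 1), i ≠ j ∧ s i ω = s j ω} = 0) :
    ∀ α ∈ Set.Icc (0 : ℝ) 1,
      (μ {ω | ((1 : ℝ) + (Finset.univ.filter
          (fun i : Fin n => s i.castSucc ω < s (Fin.last n) ω)).card) / (n + 1) ≤ α}).toReal
        ≤ α := by
  classical
  set S : Ω → (Fin (n + 1) → ℝ) := fun ω => fun i => s i ω with hSdef
  have hS : Measurable S := measurable_pi_lambda _ hmeas
  -- all positions have the same rank distribution
  have key : ∀ (k : Fin (n + 1)) (j : ℕ),
      μ {ω | rnk (S ω) k = j} = μ {ω | rnk (S ω) (Fin.last n) = j} := by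
    intro k j
    set σ := Equiv.swap (Fin.last n) k with hσdef
    have hσ := hexch σ
    have hA : MeasurableSet {v : Fin (n + 1) → ℝ | rnk v (Fin.last n) = j} :=
      measurable_rnk (Fin.last n) (measurableSet_singleton j)
    have hSσ : Measurable (fun ω => fun i => s (σ i) ω) :=
      measurable_pi_lambda _ (fun i => hmeas _)
    have h1 : μ ((fun ω => fun i => s (σ i) ω) ⁻¹' {v | rnk v (Fin.last n) = j})
        = μ (S ⁻¹' {v | rnk v (Fin.last n) = j}) := by
      rw [← Measure.map_apply hSσ hA, ← Measure.map_apply hS hA, hσ]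
    have h2 : (fun ω => fun i => s (σ i) ω) ⁻¹' {v | rnk v (Fin.last n) = j}
        = {ω | rnk (S ω) k = j} := by
      ext ω
      have hcomp : (fun i => s (σ i) ω) = (S ω) ∘ σ := rfl
      simp only [Set.mem_preimage, Set.mem_setOf_eq, hcomp, rnk_comp]
      rw [hσdef, Equiv.swap_apply_left]
    rw [← h2, h1]
    rfl
  have hDbad : MeasurableSet {ω | ∃ i j : Fin (n + 1), i ≠ j ∧ s i ω = s j ω} := by
    have : {ω | ∃ i j : Fin (n + 1), i ≠ j ∧ s i ω = s j ω}
        = ⋃ (i : Fin (n + 1)) (j : Fin (n + 1)) (_ : i ≠ j), {ω | s i ω = s j ω} := by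
      ext ω; simp
    rw [this]
    exact MeasurableSet.iUnion fun i => MeasurableSet.iUnion fun j =>
      MeasurableSet.iUnion fun _ => measurableSet_eq_fun (hmeas i) (hmeas j)
  -- each rank event has probability at most 1/(n+1)
  have bound : ∀ j : ℕ,
      μ {ω | rnk (S ω) (Fin.last n) = j} ≤ ((n : ℝ≥0∞) + 1)⁻¹ := by
    intro j
    set D := {ω | ∃ i j : Fin (n + 1), i ≠ j ∧ s i ω = s j ω}ᶜ with hD
    have hDmeas : MeasurableSet D := hDbad.compl
    set E : Fin (n + 1) → Set Ω := fun k => {ω | rnk (S ω) k = j} ∩ D with hE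
    have hEmeas : ∀ k, MeasurableSet (E k) := fun k =>
      (((measurable_rnk k).comp hS) (measurableSet_singleton j)).inter hDmeas
    have hdisj : Pairwise (Function.onFun Disjoint E) := by
      intro k l hkl
      refine Set.disjoint_left.2 ?_
      rintro ω ⟨hk, hωD⟩ ⟨hl, -⟩
      have hinj : Function.Injective (S ω) := by
        intro a b hab
        by_contra hne
        exact hωD ⟨a, b, hne, hab⟩
      exact hkl (rnk_inj hinj (hk.trans hl.symm))
    have hsum : ∑ k : Fin (n + 1), μ (E k) ≤ 1 := by
      rw [← tsum_fintype (L := SummationFilter.unconditional _), ← measure_iUnion hdisj hEmeas]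
      exact prob_le_one
    have hEeq : ∀ k, μ (E k) = μ {ω | rnk (S ω) (Fin.last n) = j} := by
      intro k
      have h1 : μ (E k) = μ {ω | rnk (S ω) k = j} := by
        apply measure_inter_conull
        simpa [hD] using hdist
      rw [h1, key k j]
    have hmul : ((n : ℝ≥0∞) + 1) * μ {ω | rnk (S ω) (Fin.last n) = j} ≤ 1 := by
      calc ((n : ℝ≥0∞) + 1) * μ {ω | rnk (S ω) (Fin.last n) = j}
          = ∑ k : Fin (n + 1), μ (E k) := by
            simp only [hEeq, Finset.sum_const, Finset.card_univ, Fintype.card_fin,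
              nsmul_eq_mul]
            push_cast
            ring
        _ ≤ 1 := hsum
    rw [ENNReal.le_inv_iff_mul_le]
    calc μ {ω | rnk (S ω) (Fin.last n) = j} * ((n : ℝ≥0∞) + 1)
        = ((n : ℝ≥0∞) + 1) * μ {ω | rnk (S ω) (Fin.last n) = j} := mul_comm _ _
      _ ≤ 1 := hmul
  intro α hα
  -- rewrite the p-value count as the rank of the last score
  have hceq : ∀ ω, ((Finset.univ.filter
      (fun i : Fin n => s i.castSucc ω < s (Fin.last n) ω)).card : ℕ)
      = rnk (S ω) (Fin.last n) := by
    intro ω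
    rw [rnk_eq_sum, Finset.card_filter, Fin.sum_univ_castSucc]
    simp [hSdef]
  set Sα : Finset ℕ := (Finset.range (n + 1)).filter
    (fun j => ((1 : ℝ) + j) / (n + 1) ≤ α) with hSα
  have hsubset : {ω | ((1 : ℝ) + (Finset.univ.filter
        (fun i : Fin n => s i.castSucc ω < s (Fin.last n) ω)).card) / (n + 1) ≤ α}
      ⊆ ⋃ j ∈ Sα, {ω | rnk (S ω) (Fin.last n) = j} := by
    intro ω hω
    simp only [Set.mem_setOf_eq, hceq ω] at hω
    exact Set.mem_biUnion (Finset.mem_filter.2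
      ⟨Finset.mem_range.2 (Nat.lt_succ_of_le (rnk_le _ _)), hω⟩) rfl
  have hμle : μ {ω | ((1 : ℝ) + (Finset.univ.filter
        (fun i : Fin n => s i.castSucc ω < s (Fin.last n) ω)).card) / (n + 1) ≤ α}
      ≤ (Sα.card : ℝ≥0∞) * ((n : ℝ≥0∞) + 1)⁻¹ := by
    calc μ _ ≤ μ (⋃ j ∈ Sα, {ω | rnk (S ω) (Fin.last n) = j}) := measure_mono hsubset
      _ ≤ ∑ j ∈ Sα, μ {ω | rnk (S ω) (Fin.last n) = j} := measure_biUnion_finset_le _ _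
      _ ≤ ∑ _j ∈ Sα, ((n : ℝ≥0∞) + 1)⁻¹ := Finset.sum_le_sum fun j _ => bound j
      _ = (Sα.card : ℝ≥0∞) * ((n : ℝ≥0∞) + 1)⁻¹ := by
          rw [Finset.sum_const, nsmul_eq_mul]
  -- count the favorable ranks
  have hcard : (Sα.card : ℝ) ≤ α * (n + 1) := by
    have hsub2 : Sα ⊆ Finset.range ⌊α * (n + 1)⌋₊ := by
      intro j hj
      rw [hSα, Finset.mem_filter] at hj
      rw [Finset.mem_range]
      have hpos : (0 : ℝ) < (n : ℝ) + 1 := by positivity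
      have h1 : ((1 : ℝ) + j) ≤ α * ((n : ℝ) + 1) := by
        have := (div_le_iff₀ hpos).1 hj.2
        linarith
      have : (j + 1 : ℕ) ≤ ⌊α * ((n : ℝ) + 1)⌋₊ := by
        apply Nat.le_floor
        push_cast
        linarith
      omega
    have h2 : Sα.card ≤ ⌊α * ((n : ℝ) + 1)⌋₊ := by
      simpa using Finset.card_le_card hsub2
    have h3 : (⌊α * ((n : ℝ) + 1)⌋₊ : ℝ) ≤ α * ((n : ℝ) + 1) := by
      apply Nat.floor_le
      have := hα.1
      positivity
    calc (Sα.card : ℝ) ≤ (⌊α * ((n : ℝ) + 1)⌋₊ : ℝ) := by exact_mod_cast h2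
      _ ≤ α * ((n : ℝ) + 1) := h3
  -- conclude by converting to real numbers
  have hfin : (Sα.card : ℝ≥0∞) * ((n : ℝ≥0∞) + 1)⁻¹ ≠ ⊤ := by
    apply ENNReal.mul_ne_top (by simp)
    exact ENNReal.inv_ne_top.2 (by simp)
  have hto : (μ {ω | ((1 : ℝ) + (Finset.univ.filter
        (fun i : Fin n => s i.castSucc ω < s (Fin.last n) ω)).card) / (n + 1) ≤ α}).toReal
      ≤ ((Sα.card : ℝ≥0∞) * ((n : ℝ≥0∞) + 1)⁻¹).toReal :=
    ENNReal.toReal_mono hfin hμle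
  have hval : ((Sα.card : ℝ≥0∞) * ((n : ℝ≥0∞) + 1)⁻¹).toReal
      = (Sα.card : ℝ) * ((n : ℝ) + 1)⁻¹ := by
    rw [show ((n : ℝ≥0∞) + 1) = ((n + 1 : ℕ) : ℝ≥0∞) by push_cast; ring,
      ENNReal.toReal_mul, ENNReal.toReal_inv]
    rw [ENNReal.toReal_natCast, ENNReal.toReal_natCast]
    push_cast
    ring
  rw [hval] at hto
  have hpos : (0 : ℝ) < (n : ℝ) + 1 := by positivity
  calc (μ _).toReal ≤ (Sα.card : ℝ) * ((n : ℝ) + 1)⁻¹ := hto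
    _ ≤ (α * ((n : ℝ) + 1)) * ((n : ℝ) + 1)⁻¹ := by
        apply mul_le_mul_of_nonneg_right hcard
        positivity
    _ = α := by field_simp
end

section
/- Let s, s_1, ..., s_n be i.i.d. real random variables whose common CDF F is Lipschitz continuous, and let q̂_{α/2} be the ⌊(α/2)n⌋-th order statistic of s_1,...,s_n. Then lim_{n→∞} P(s < q̂_{α/2}) ≤ α/2. -/
open MeasureTheory Filter Set ProbabilityTheory

lemma countP_lt_of_lt_kthSmallest (l : List ℝ) (k : ℕ) (hk1 : 1 ≤ k) (hkn : k ≤ l.length)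
    (x : ℝ) (h : x < kthSmallest l k) :
    l.countP (fun a => decide (a ≤ x)) < k := by
  classical
  set s := l.mergeSort (fun a b => a ≤ b) with hs
  have hlen : s.length = l.length := List.length_mergeSort l
  have hperm : s.Perm l := List.mergeSort_perm l _
  have hsort : s.Pairwise (· ≤ ·) := List.pairwise_mergeSort' _ l
  have hk1' : k - 1 < s.length := by omega
  have hkth : kthSmallest l k = s[k-1] := List.getD_eq_getElem s 0 hk1'
  rw [← hperm.countP_eq]
  have hsplit : s = s.take (k-1) ++ s.drop (k-1) := (List.take_append_drop _ _).symm
  have hdrop : (s.drop (k-1)).countP (fun a => decide (a ≤ x)) = 0 := by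
    rw [List.countP_eq_zero]
    intro a ha
    obtain ⟨i, hi, rfl⟩ := List.mem_iff_getElem.mp ha
    rw [List.getElem_drop]
    have hij : (k-1) ≤ (k-1) + i := Nat.le_add_right _ _
    have hi' : k - 1 + i < s.length := by
      have := (List.length_drop (i := k-1) (l := s)) ▸ hi; omega
    have hle : s[k-1] ≤ s.get ⟨k - 1 + i, hi'⟩ := by
      have := hsort.rel_get_of_le (a := ⟨k-1, hk1'⟩)
        (b := ⟨k - 1 + i, hi'⟩) (by simpa using hij)
      simpa [List.get_eq_getElem] using this
    simp only [decide_eq_true_eq]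
    push_neg
    calc x < s[k-1] := hkth ▸ h
      _ ≤ _ := by rw [List.get_eq_getElem] at hle; exact hle
  have htake : (s.take (k-1)).countP (fun a => decide (a ≤ x)) ≤ k - 1 := by
    calc (s.take (k-1)).countP _ ≤ (s.take (k-1)).length := List.countP_le_length
      _ ≤ k - 1 := by simp [List.length_take]
  calc s.countP (fun a => decide (a ≤ x))
      = (s.take (k-1)).countP _ + (s.drop (k-1)).countP _ := by
        conv_lhs => rw [hsplit]
        exact List.countP_append
    _ ≤ (k-1) + 0 := by omega
    _ < k := by omega

lemma countP_ofFn {n : ℕ} (f : Fin n → ℝ) (p : ℝ → Bool) :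
    (List.ofFn f).countP p = ∑ i : Fin n, (if p (f i) then 1 else 0) := by
  induction n with
  | zero => simp
  | succ n ih =>
      rw [List.ofFn_succ, List.countP_cons, ih, Fin.sum_univ_succ]
      ring

/-- For i.i.d. reals `s, s_1, …, s_n` whose common CDF is Lipschitz continuous, with
`q̂_{α/2}` the `⌊(α/2)n⌋`-th order statistic of `s_1,…,s_n`, one has
`lim_{n→∞} P(s < q̂_{α/2}) ≤ α/2`. -/
theorem prob_below_empirical_quantile {Ω : Type*} [MeasurableSpace Ω] (μ : Measure Ω)
    [IsProbabilityMeasure μ] (u : ℕ → Ω → ℝ) (ν : Measure ℝ) [IsProbabilityMeasure ν]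
    (hmeas : ∀ i, Measurable (u i))
    (hident : ∀ i, Measure.map (u i) μ = ν)
    (hindep : iIndepFun u μ)
    (F : ℝ → ℝ) (hF : ∀ x, F x = (ν (Set.Iic x)).toReal)
    (L : NNReal) (hLip : LipschitzWith L F)
    (α : ℝ) (hα : α ∈ Set.Ioo (0 : ℝ) 1) :
    Filter.limsup (fun n : ℕ =>
      (μ {ω | u 0 ω < kthSmallest (List.ofFn (fun i : Fin n => u (i + 1) ω))
        ⌊(α / 2) * n⌋₊}).toReal) atTop ≤ α / 2 := by
  obtain ⟨hα0, hα1⟩ := hα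
  have hFcdf : F = fun x => cdf ν x := by
    funext x; rw [hF, cdf_eq_real, measureReal_def]
  have hFmono : Monotone F := by rw [hFcdf]; exact fun a b hab => (cdf ν).mono hab
  have hF0 : Tendsto F atBot (nhds 0) := by rw [hFcdf]; exact tendsto_cdf_atBot ν
  have hF1 : Tendsto F atTop (nhds 1) := by rw [hFcdf]; exact tendsto_cdf_atTop ν
  refine le_of_forall_pos_le_add fun ε hε => ?_
  set δ : ℝ := min ε ((1 - α/2)/2) with hδdef
  have hδpos : 0 < δ := lt_min hε (by linarith)
  have hδε : δ ≤ ε := min_le_left _ _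
  set c : ℝ := α/2 + δ with hcdef
  have hc0 : 0 < c := by positivity
  have hc1 : c < 1 := by
    have : δ ≤ (1 - α/2)/2 := min_le_right _ _
    simp only [hcdef]; linarith
  -- find q with F q = c
  obtain ⟨a, ha⟩ : ∃ a, F a < c := (hF0.eventually (gt_mem_nhds hc0)).exists
  obtain ⟨b, hb⟩ : ∃ b, c < F b := (hF1.eventually (lt_mem_nhds hc1)).exists
  obtain ⟨q, -, hq⟩ : ∃ q ∈ Icc (min a b) (max a b), F q = c := by
    have hsub := intermediate_value_Icc (min_le_max (a := a) (b := b))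
      (hLip.continuous.continuousOn (s := Icc (min a b) (max a b)))
    have : c ∈ Icc (F (min a b)) (F (max a b)) :=
      ⟨(lt_of_le_of_lt (hFmono (min_le_left a b)) ha).le,
       le_trans hb.le (hFmono (le_max_right a b))⟩
    obtain ⟨q, hq1, hq2⟩ := hsub this
    exact ⟨q, hq1, hq2⟩
  -- indicator machinery
  set g : ℝ → ℝ := (Iic q).indicator (fun _ => (1:ℝ)) with hgdef
  have hgmeas : Measurable g := measurable_const.indicator measurableSet_Iic
  set Y : ℕ → Ω → ℝ := fun j => g ∘ u j with hYdef
  have hYif : ∀ j ω, Y j ω = if u j ω ≤ q then 1 else 0 := by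
    intro j ω
    simp [hYdef, hgdef, Set.indicator_apply, Set.mem_Iic]
  have hYmeas : ∀ j, Measurable (Y j) := fun j => hgmeas.comp (hmeas j)
  have hYmem : ∀ j, MemLp (Y j) 2 μ := by
    intro j
    refine MemLp.of_bound (hYmeas j).aestronglyMeasurable 1 (ae_of_all _ fun ω => ?_)
    rw [hYif]
    split <;> simp
  have hYexp : ∀ j, ∫ ω, Y j ω ∂μ = c := by
    intro j
    have h1 : ∫ ω, Y j ω ∂μ = ∫ x, g x ∂ν := by
      rw [← hident j, integral_map (hmeas j).aemeasurable hgmeas.aestronglyMeasurable]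
      rfl
    rw [h1, hgdef, integral_indicator_const (1:ℝ) measurableSet_Iic, smul_eq_mul, mul_one,
      measureReal_def, ← hF q, hq]
  have hYsq : ∀ j, (Y j)^2 = Y j := by
    intro j
    funext ω
    rw [Pi.pow_apply, hYif]
    split <;> norm_num
  have hYvar : ∀ j, variance (Y j) μ ≤ 1 := by
    intro j
    calc variance (Y j) μ ≤ ∫ ω, ((Y j)^2) ω ∂μ :=
          variance_le_expectation_sq (hYmeas j).aestronglyMeasurable
      _ = c := by rw [hYsq]; exact hYexp j
      _ ≤ 1 := hc1.le
  set S : ℕ → Ω → ℝ := fun n ω => ∑ j ∈ Finset.range n, Y (j+1) ω with hSdef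
  have hSmeas : ∀ n, Measurable (S n) := fun n => Finset.measurable_sum _ fun j _ => hYmeas _
  have hSexp : ∀ n, ∫ ω, S n ω ∂μ = n * c := by
    intro n
    rw [hSdef]
    simp only
    rw [integral_finset_sum _ (fun j _ => (hYmem (j+1)).integrable one_le_two)]
    simp [hYexp]
  have hSmem : ∀ n, MemLp (S n) 2 μ := by
    intro n
    have : S n = ∑ j ∈ Finset.range n, Y (j+1) := by
      funext ω; simp [hSdef]
    rw [this]
    exact memLp_finset_sum' _ fun j _ => hYmem (j+1)
  have hSvar : ∀ n, variance (S n) μ ≤ n := by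
    intro n
    have hfun : S n = ∑ j ∈ Finset.range n, Y (j+1) := by
      funext ω; simp [hSdef]
    rw [hfun, IndepFun.variance_sum (fun j _ => hYmem (j+1))
      (fun i hi j hj hij => IndepFun.comp (hindep.indepFun (by omega : i+1 ≠ j+1)) hgmeas hgmeas)]
    calc ∑ j ∈ Finset.range n, variance (Y (j+1)) μ ≤ ∑ j ∈ Finset.range n, 1 :=
          Finset.sum_le_sum fun j _ => hYvar (j+1)
      _ = n := by simp
  -- the event and its bound
  set B : ℕ → Set Ω := fun n => {ω | S n ω < (⌊(α/2)*(n:ℝ)⌋₊ : ℝ)} with hBdef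
  set E : ℕ → Set Ω := fun n => {ω | u 0 ω < kthSmallest
    (List.ofFn (fun i : Fin n => u (i + 1) ω)) ⌊(α/2)*(n:ℝ)⌋₊} with hEdef
  have hev : ∀ᶠ n : ℕ in atTop, (μ (E n)).toReal ≤ c + (1/δ^2)/(n:ℝ) := by
    refine eventually_atTop.2 ⟨max 1 ⌈2/α⌉₊, fun n hn => ?_⟩
    have hn1 : 1 ≤ n := le_trans (le_max_left _ _) hn
    have hn1' : (1:ℝ) ≤ (n:ℝ) := by exact_mod_cast hn1
    have hnceil : (2/α : ℝ) ≤ (n:ℝ) := by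
      calc (2/α : ℝ) ≤ (⌈2/α⌉₊ : ℝ) := Nat.le_ceil _
        _ ≤ (n:ℝ) := by exact_mod_cast le_trans (le_max_right _ _) hn
    have h2an : 2 ≤ α * (n:ℝ) := by
      rw [div_le_iff₀ hα0] at hnceil; linarith
    have hk1 : 1 ≤ ⌊(α/2)*(n:ℝ)⌋₊ := by
      apply Nat.le_floor
      push_cast
      linarith
    have hkle : ((⌊(α/2)*(n:ℝ)⌋₊ : ℕ) : ℝ) ≤ (α/2)*(n:ℝ) := Nat.floor_le (by positivity)
    have hkn : ⌊(α/2)*(n:ℝ)⌋₊ ≤ n := by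
      calc ⌊(α/2)*(n:ℝ)⌋₊ ≤ ⌊(n:ℝ)⌋₊ := Nat.floor_mono (by nlinarith)
        _ = n := Nat.floor_natCast n
    -- Chebyshev
    have hcheb : μ (B n) ≤ ENNReal.ofReal ((n:ℝ) / (δ*(n:ℝ))^2) := by
      have hsub : B n ⊆ {ω | δ*(n:ℝ) ≤ |S n ω - ∫ x, S n x ∂μ|} := by
        intro ω hω
        simp only [hBdef, Set.mem_setOf_eq] at hω
        have h1 : S n ω < (α/2)*(n:ℝ) := lt_of_lt_of_le hω hkle
        have h2 : δ*(n:ℝ) ≤ (n:ℝ)*c - S n ω := by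
          simp only [hcdef]; nlinarith
        simp only [Set.mem_setOf_eq, hSexp n]
        calc δ*(n:ℝ) ≤ (n:ℝ)*c - S n ω := h2
          _ ≤ |S n ω - (n:ℝ)*c| := by
            rw [abs_sub_comm]; exact le_abs_self _
      calc μ (B n) ≤ μ {ω | δ*(n:ℝ) ≤ |S n ω - ∫ x, S n x ∂μ|} := measure_mono hsub
        _ ≤ ENNReal.ofReal (variance (S n) μ / (δ*(n:ℝ))^2) :=
            meas_ge_le_variance_div_sq (hSmem n) (by positivity)
        _ ≤ ENNReal.ofReal ((n:ℝ) / (δ*(n:ℝ))^2) := by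
            apply ENNReal.ofReal_le_ofReal
            apply div_le_div_of_nonneg_right (hSvar n)
            positivity
    -- event inclusion
    have hincl : E n ⊆ (u 0 ⁻¹' (Iio q)) ∪ B n := by
      intro ω hω
      by_cases hcase : u 0 ω < q
      · exact Or.inl hcase
      · right
        push_neg at hcase
        simp only [hEdef, Set.mem_setOf_eq] at hω
        have hlen : (List.ofFn (fun i : Fin n => u (i + 1) ω)).length = n := List.length_ofFn
        have hcount := countP_lt_of_lt_kthSmallest _ _ hk1 (by rw [hlen]; exact hkn) _ hω
        have hcount2 : (List.ofFn (fun i : Fin n => u (i + 1) ω)).countP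
            (fun a => decide (a ≤ q)) < ⌊(α/2)*(n:ℝ)⌋₊ := by
          refine lt_of_le_of_lt (List.countP_mono_left fun x _ hx => ?_) hcount
          simp only [decide_eq_true_eq] at hx ⊢
          linarith
        simp only [hBdef, Set.mem_setOf_eq]
        have hSeq : S n ω = ((List.ofFn (fun i : Fin n => u (i + 1) ω)).countP
            (fun a => decide (a ≤ q)) : ℝ) := by
          rw [countP_ofFn]
          push_cast
          rw [hSdef]
          simp only
          rw [← Fin.sum_univ_eq_sum_range (fun j => Y (j+1) ω) n]
          congr 1
          funext i
          rw [hYif]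
          simp [apply_ite]
        rw [hSeq]
        exact_mod_cast hcount2
    -- measure arithmetic
    have hq_meas : (μ (u 0 ⁻¹' (Iio q))).toReal ≤ c := by
      have h1 : μ (u 0 ⁻¹' (Iio q)) = ν (Iio q) := by
        rw [← hident 0, Measure.map_apply (hmeas 0) measurableSet_Iio]
      rw [h1]
      calc (ν (Iio q)).toReal ≤ (ν (Iic q)).toReal :=
            ENNReal.toReal_mono (measure_ne_top ν _) (measure_mono Iio_subset_Iic_self)
        _ = F q := (hF q).symm
        _ = c := hq
    have hB_meas : (μ (B n)).toReal ≤ (1/δ^2)/(n:ℝ) := by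
      have heq : (n:ℝ) / (δ*(n:ℝ))^2 = (1/δ^2)/(n:ℝ) := by
        field_simp
      calc (μ (B n)).toReal ≤ (ENNReal.ofReal ((n:ℝ) / (δ*(n:ℝ))^2)).toReal :=
            ENNReal.toReal_mono ENNReal.ofReal_ne_top hcheb
        _ = (n:ℝ) / (δ*(n:ℝ))^2 := ENNReal.toReal_ofReal (by positivity)
        _ = (1/δ^2)/(n:ℝ) := heq
    calc (μ (E n)).toReal ≤ (μ ((u 0 ⁻¹' (Iio q)) ∪ B n)).toReal :=
          ENNReal.toReal_mono (measure_ne_top μ _) (measure_mono hincl)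
      _ ≤ (μ (u 0 ⁻¹' (Iio q)) + μ (B n)).toReal :=
          ENNReal.toReal_mono (ENNReal.add_ne_top.2 ⟨measure_ne_top μ _, measure_ne_top μ _⟩)
            (measure_union_le _ _)
      _ = (μ (u 0 ⁻¹' (Iio q))).toReal + (μ (B n)).toReal :=
          ENNReal.toReal_add (measure_ne_top μ _) (measure_ne_top μ _)
      _ ≤ c + (1/δ^2)/(n:ℝ) := add_le_add hq_meas hB_meas
  -- conclude via limsup
  have htend : Tendsto (fun n : ℕ => c + (1/δ^2)/(n:ℝ)) atTop (nhds c) := by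
    have := tendsto_const_nhds (x := c) (f := atTop (α := ℕ)) |>.add
      (tendsto_const_div_atTop_nhds_zero_nat (1/δ^2))
    simpa using this
  have hgoal : Filter.limsup (fun n : ℕ => (μ (E n)).toReal) atTop ≤ c := by
    calc Filter.limsup (fun n : ℕ => (μ (E n)).toReal) atTop
        ≤ Filter.limsup (fun n : ℕ => c + (1/δ^2)/(n:ℝ)) atTop :=
          Filter.limsup_le_limsup hev
            (Filter.isCoboundedUnder_le_of_le atTop (x := 0) fun n => ENNReal.toReal_nonneg)
            htend.isBoundedUnder_le
      _ = c := htend.limsup_eq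
  refine le_trans (le_of_eq ?_) (hgoal.trans (by simp only [hcdef]; linarith))
  congr 1
end
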